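/- Let G be a graph, T ⊆ V(G) a set with T not a dominating set of G, and let F' and X' be fixed disjoint subsets of V(G) ∖ (T ∪ U), where U is the (nonempty) set of vertices not in the closed neighborhood of T. Then the number of ordered partitions (T, F, X) of V(G) with no edges between T and F extending (T, F', X') (meaning F ∖ U = F' and X ∖ U = X' after removing U) is exactly 2^{|U|}, which is even. -/

import Mathlib

open Classical in
/-- If `T` is not a dominating set, `U` is the (nonempty) set of vertices outside the
closed neighborhood of `T`, and `F', X'` are fixed disjoint sets partitioning
`V ∖ (T ∪ U)` with no edges between `T` and `F'`, then the number of ordered partitions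
`(T, F, X)` of `V(G)` with no edges between `T` and `F` satisfying `F ∖ U = F'` and
`X ∖ U = X'` is exactly `2^{|U|}`, an even number. -/
theorem extensions_card {V : Type*} [Fintype V] [DecidableEq V] (G : SimpleGraph V)
    (T F' X' U : Finset V)
    (hU : U = Finset.univ.filter (fun v => v ∉ T ∧ ∀ u ∈ T, ¬ G.Adj u v))
    (hdom : ¬ ∀ v, v ∉ T → ∃ u ∈ T, G.Adj u v)
    (hF'X' : Disjoint F' X')
    (hF' : F' ⊆ Finset.univ \ (T ∪ U)) (hX' : X' ⊆ Finset.univ \ (T ∪ U))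
    (hcov : T ∪ U ∪ F' ∪ X' = Finset.univ)
    (hTF' : ∀ u ∈ T, ∀ v ∈ F', ¬ G.Adj u v) :
    ((Finset.univ : Finset (Finset V × Finset V)).filter (fun FX =>
        Disjoint T FX.1 ∧ Disjoint T FX.2 ∧ Disjoint FX.1 FX.2 ∧
        T ∪ FX.1 ∪ FX.2 = Finset.univ ∧
        (∀ u ∈ T, ∀ v ∈ FX.1, ¬ G.Adj u v) ∧
        FX.1 \ U = F' ∧ FX.2 \ U = X')).card = 2 ^ U.card := by
  classical
  have hTU : Disjoint T U := by
    rw [Finset.disjoint_right]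
    intro v hv
    rw [hU] at hv
    simp only [Finset.mem_filter, Finset.mem_univ, true_and] at hv
    exact hv.1
  have hF'U : Disjoint F' U := by
    rw [Finset.disjoint_left]
    intro v hv
    have := hF' hv
    simp only [Finset.mem_sdiff, Finset.mem_union, Finset.mem_univ, true_and] at this
    exact fun h => this (Or.inr h)
  have hX'U : Disjoint X' U := by
    rw [Finset.disjoint_left]
    intro v hv
    have := hX' hv
    simp only [Finset.mem_sdiff, Finset.mem_union, Finset.mem_univ, true_and] at this
    exact fun h => this (Or.inr h)
  have hTF'd : Disjoint T F' := by
    rw [Finset.disjoint_right]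
    intro v hv
    have := hF' hv
    simp only [Finset.mem_sdiff, Finset.mem_union, Finset.mem_univ, true_and] at this
    exact fun h => this (Or.inl h)
  have hTX'd : Disjoint T X' := by
    rw [Finset.disjoint_right]
    intro v hv
    have := hX' hv
    simp only [Finset.mem_sdiff, Finset.mem_union, Finset.mem_univ, true_and] at this
    exact fun h => this (Or.inl h)
  have hTUadj : ∀ u ∈ T, ∀ v ∈ U, ¬ G.Adj u v := by
    intro u hu v hv
    rw [hU] at hv
    simp only [Finset.mem_filter, Finset.mem_univ, true_and] at hv
    exact hv.2 u hu
  rw [← Finset.card_powerset U]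
  apply Finset.card_nbij' (fun FX => FX.1 ∩ U)
    (fun S => (F' ∪ S, X' ∪ (U \ S)))
  · intro a _
    simp [Finset.inter_subset_right]
  · intro S hS
    rw [Finset.mem_coe, Finset.mem_powerset] at hS
    simp only [Finset.mem_coe, Finset.mem_filter, Finset.mem_univ, true_and]
    refine ⟨?_, ?_, ?_, ?_, ?_, ?_, ?_⟩
    · exact Finset.disjoint_union_right.2 ⟨hTF'd, hTU.mono_right hS⟩
    · exact Finset.disjoint_union_right.2 ⟨hTX'd, hTU.mono_right (Finset.sdiff_subset)⟩
    · refine Finset.disjoint_union_right.2 ⟨Finset.disjoint_union_left.2 ⟨hF'X', (hX'U.mono_right hS).symm⟩, Finset.disjoint_union_left.2 ⟨hF'U.mono_right Finset.sdiff_subset, Finset.disjoint_sdiff⟩⟩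
    · have : S ∪ (U \ S) = U := Finset.union_sdiff_of_subset hS
      rw [← hcov]
      ext v
      simp only [Finset.mem_union, Finset.mem_sdiff]
      by_cases hvS : v ∈ S
      · have : v ∈ U := hS hvS
        tauto
      · tauto
    · intro u hu v hv
      rcases Finset.mem_union.1 hv with h | h
      · exact hTF' u hu v h
      · exact hTUadj u hu v (hS h)
    · rw [Finset.union_sdiff_distrib, Finset.sdiff_eq_self_of_disjoint hF'U,
        Finset.sdiff_eq_empty_iff_subset.2 hS, Finset.union_empty]
    · rw [Finset.union_sdiff_distrib, Finset.sdiff_eq_self_of_disjoint hX'U,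
        Finset.sdiff_eq_empty_iff_subset.2 Finset.sdiff_subset, Finset.union_empty]
  · intro FX hFX
    simp only [Finset.mem_coe, Finset.mem_filter, Finset.mem_univ, true_and] at hFX
    obtain ⟨hTF, hTX, hFXd, hunion, _, hF, hX⟩ := hFX
    have h1 : F' ∪ FX.1 ∩ U = FX.1 := by
      rw [← hF]; exact Finset.sdiff_union_inter _ _
    have h2 : U \ (FX.1 ∩ U) = FX.2 ∩ U := by
      ext v
      simp only [Finset.mem_sdiff, Finset.mem_inter]
      constructor
      · rintro ⟨hv, hn⟩
        have hvnT : v ∉ T := Finset.disjoint_right.1 hTU hv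
        have : v ∈ T ∪ FX.1 ∪ FX.2 := by rw [hunion]; exact Finset.mem_univ v
        simp only [Finset.mem_union] at this
        rcases this with (h | h) | h
        · exact absurd h hvnT
        · exact absurd ⟨h, hv⟩ hn
        · exact ⟨h, hv⟩
      · rintro ⟨h2v, hv⟩
        exact ⟨hv, fun h => Finset.disjoint_left.1 hFXd h.1 h2v⟩
    have h3 : X' ∪ FX.2 ∩ U = FX.2 := by
      rw [← hX]; exact Finset.sdiff_union_inter _ _
    ext1
    · simp [h1]
    · simp [h2, h3]
  · intro S hS
    rw [Finset.mem_coe, Finset.mem_powerset] at hS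
    simp only
    rw [Finset.union_inter_distrib_right,
      (Finset.disjoint_iff_inter_eq_empty.1 hF'U), Finset.empty_union,
      Finset.inter_eq_left.2 hS]
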